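/- arXiv:2008.09373 — 4 statements merged into one kernel-verified Lean document; each statement's English description precedes it below -/
import Mathlib

section
/- Every C² solution z : (-l, ∞) → ℝ (with l > 0) of the ODE -z'' - z'/(l + r) = e^z on (-l, ∞) satisfying z ≤ 0, z(0) = 0 and z'(0) = 0 is given explicitly by z(r) = log( 4A² l^{A+2} (r+l)^{A-2} / ((A+2) l^A + (A-2)(r+l)^A)² ), where A = √(2 l² + 4). -/
open Real Set

noncomputable def dd (l A r : ℝ) : ℝ := (A+2)*l^A + (A-2)*(r+l)^A

noncomputable def ww (l A r : ℝ) : ℝ :=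
  Real.log (4*A^2*l^(A+2)*(r+l)^(A-2)/(dd l A r)^2)

noncomputable def w1 (l A r : ℝ) : ℝ :=
  (A-2)/(r+l) - 2*(A-2)*A*(r+l)^(A-1)/(dd l A r)

noncomputable def w2 (l A r : ℝ) : ℝ :=
  -((A-2)/(r+l)^2) - 2*(A-2)*A*(A-1)*(r+l)^(A-2)/(dd l A r)
    + 2*(A-2)^2*A^2*(r+l)^(2*A-2)/(dd l A r)^2

variable {l A r : ℝ}

lemma dd_pos (hl : 0 < l) (hA : 2 < A) (hr : -l < r) : 0 < dd l A r := by
  have hs : 0 < r + l := by linarith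
  have h1 : (0:ℝ) < (A+2)*l^A := by positivity
  have h2 : (0:ℝ) < (A-2)*(r+l)^A := by
    apply mul_pos (by linarith) (rpow_pos_of_pos hs A)
  unfold dd; linarith

lemma num_pos (hl : 0 < l) (hA : 2 < A) (hr : -l < r) :
    0 < 4*A^2*l^(A+2)*(r+l)^(A-2) := by
  have hs : 0 < r + l := by linarith
  have h1 := rpow_pos_of_pos hs (A-2)
  have h2 := rpow_pos_of_pos hl (A+2)
  positivity

lemma exp_ww (hl : 0 < l) (hA : 2 < A) (hr : -l < r) :
    Real.exp (ww l A r) = 4*A^2*l^(A+2)*(r+l)^(A-2)/(dd l A r)^2 := by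
  apply Real.exp_log
  exact div_pos (num_pos hl hA hr) (pow_pos (dd_pos hl hA hr) 2)

lemma ww_zero (hl : 0 < l) (hA : 2 < A) : ww l A 0 = 0 := by
  unfold ww dd
  rw [zero_add]
  have hden : (A+2)*l^A + (A-2)*l^A = 2*A*l^A := by ring
  rw [hden]
  have key : 4*A^2*l^(A+2)*l^(A-2) = (2*A*l^A)^2 := by
    have h2 : l^(A+2)*l^(A-2) = l^A*l^A := by
      rw [← rpow_add hl, ← rpow_add hl]; ring_nf
    rw [show 4*A^2*l^(A+2)*l^(A-2) = 4*A^2*(l^(A+2)*l^(A-2)) by ring, h2]; ring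
  rw [key, div_self (by positivity), Real.log_one]

lemma w1_zero (hl : 0 < l) (hA : 2 < A) : w1 l A 0 = 0 := by
  unfold w1 dd
  rw [zero_add]
  have hden : (A+2)*l^A + (A-2)*l^A = 2*A*l^A := by ring
  rw [hden]
  have hl1 : l^(A-1) = l^A / l := by rw [rpow_sub hl, rpow_one]
  have hlA := rpow_pos_of_pos hl A
  rw [hl1]
  field_simp
  ring


lemma hasDerivAt_splus (r : ℝ) : HasDerivAt (fun x : ℝ => x + l) 1 r :=
  (hasDerivAt_id r).add_const l

lemma hasDerivAt_dd (hr : -l < r) :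
    HasDerivAt (dd l A) ((A-2)*(1*A*(r+l)^(A-1))) r := by
  have hs : 0 < r + l := by linarith
  unfold dd
  exact (((hasDerivAt_splus r).rpow_const (Or.inl hs.ne')).const_mul (A-2)).const_add _

lemma ww_eq (hl : 0 < l) (hA : 2 < A) (hr : -l < r) :
    ww l A r = Real.log (4*A^2*l^(A+2)) + (A-2)*Real.log (r+l) - 2*Real.log (dd l A r) := by
  have hs : 0 < r + l := by linarith
  have hC : (0:ℝ) < 4*A^2*l^(A+2) := by
    have := rpow_pos_of_pos hl (A+2); positivity
  have hD := dd_pos hl hA hr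
  have hrp := rpow_pos_of_pos hs (A-2)
  unfold ww
  rw [Real.log_div (by positivity) (by positivity),
    Real.log_mul hC.ne' hrp.ne', Real.log_rpow hs, Real.log_pow]
  push_cast
  ring

lemma hasDerivAt_ww (hl : 0 < l) (hA : 2 < A) (hr : -l < r) :
    HasDerivAt (ww l A) (w1 l A r) r := by
  have hs : 0 < r + l := by linarith
  have hD := dd_pos hl hA hr
  have hev : ww l A =ᶠ[nhds r] fun x =>
      Real.log (4*A^2*l^(A+2)) + (A-2)*Real.log (x+l) - 2*Real.log (dd l A x) := by
    filter_upwards [isOpen_Ioi.mem_nhds (show r ∈ Ioi (-l) from hr)] with x hx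
    exact ww_eq hl hA hx
  rw [hev.hasDerivAt_iff]
  have h1 : HasDerivAt (fun x : ℝ => Real.log (x+l)) (1/(r+l)) r := by
    simpa using (hasDerivAt_splus r).log hs.ne'
  have h2 : HasDerivAt (fun x => Real.log (dd l A x))
      ((A-2)*(1*A*(r+l)^(A-1))/(dd l A r)) r := (hasDerivAt_dd hr).log hD.ne'
  have h3 := ((h1.const_mul (A-2)).const_add
      (Real.log (4*A^2*l^(A+2)))).sub (h2.const_mul 2)
  convert h3 using 1
  · funext x; rfl
  unfold w1
  ring

lemma hasDerivAt_w1 (hl : 0 < l) (hA : 2 < A) (hr : -l < r) :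
    HasDerivAt (w1 l A) (w2 l A r) r := by
  have hs : 0 < r + l := by linarith
  have hD := dd_pos hl hA hr
  have h1 : HasDerivAt (fun x : ℝ => (A-2)/(x+l))
      ((0*(r+l) - (A-2)*1)/(r+l)^2) r :=
    (hasDerivAt_const r (A-2)).div (hasDerivAt_splus r) hs.ne'
  have hnum : HasDerivAt (fun x : ℝ => 2*(A-2)*A*(x+l)^(A-1))
      ((2*(A-2)*A)*(1*(A-1)*(r+l)^(A-1-1))) r :=
    ((hasDerivAt_splus r).rpow_const (Or.inl hs.ne')).const_mul _
  have h2 : HasDerivAt (fun x : ℝ => 2*(A-2)*A*(x+l)^(A-1)/(dd l A x))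
      (((2*(A-2)*A)*(1*(A-1)*(r+l)^(A-1-1))*(dd l A r)
        - 2*(A-2)*A*(r+l)^(A-1)*((A-2)*(1*A*(r+l)^(A-1))))/(dd l A r)^2) r :=
    hnum.div (hasDerivAt_dd hr) hD.ne'
  refine (h1.sub h2).congr_deriv ?_
  unfold w2
  rw [show A-1-1 = A-2 by ring, show 2*A-2 = (A-1)+(A-1) by ring, rpow_add hs]
  field_simp
  ring


lemma ode_ww (hl : 0 < l) (hA : 2 < A) (hA2 : A^2 = 2*l^2+4) (hr : -l < r) :
    -(w2 l A r) - w1 l A r/(l+r) = Real.exp (ww l A r) := by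
  have hs : 0 < r + l := by linarith
  have hD : 0 < dd l A r := dd_pos hl hA hr
  have hP := rpow_pos_of_pos hs A
  have hQ := rpow_pos_of_pos hl A
  have h1 : (r+l)^(A-1) = (r+l)^A/(r+l) := by rw [rpow_sub hs, rpow_one]
  have h2 : (r+l)^(A-2) = (r+l)^A/(r+l)/(r+l) := by
    rw [show A-2 = A-1-1 by ring, rpow_sub hs, rpow_one, h1]
  have h3 : (r+l)^(2*A-2) = ((r+l)^A/(r+l))*((r+l)^A/(r+l)) := by
    rw [show 2*A-2=(A-1)+(A-1) by ring, rpow_add hs, h1]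
  have h4 : l^(A+2) = l^A*l*l := by
    rw [show A+2 = A+1+1 by ring, rpow_add hl, rpow_add hl, rpow_one]
  have hDdef : dd l A r = (A+2)*l^A + (A-2)*(r+l)^A := rfl
  have step1 : -(w2 l A r) - w1 l A r/(l+r) =
      (2*(A-2)*A^2*((r+l)^A)*(dd l A r) - 2*(A-2)^2*A^2*((r+l)^A)^2)
        /((r+l)^2*(dd l A r)^2) := by
    unfold w1 w2
    rw [h1, h2, h3, show l + r = r + l by ring]
    field_simp
    ring
  have h5 : 2*(A-2)*A^2*((r+l)^A)*(dd l A r) - 2*(A-2)^2*A^2*((r+l)^A)^2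
      = 4*A^2*(l^A*l*l)*((r+l)^A) := by
    rw [hDdef]
    linear_combination (2*A^2*((r+l)^A)*(l^A)) * hA2
  rw [step1, h5, exp_ww hl hA hr, h2, h4]
  field_simp

lemma exp_lip_aux {R x y : ℝ} (hy : y ≤ R) (h : x ≤ y) :
    Real.exp y - Real.exp x ≤ Real.exp R * (y - x) := by
  have e1 := Real.add_one_le_exp (x-y)
  have e2 := Real.exp_le_exp.2 hy
  have e3 : Real.exp x = Real.exp y * Real.exp (x-y) := by
    rw [← Real.exp_add]; ring_nf
  nlinarith [Real.exp_pos y,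
    mul_nonneg (Real.exp_pos y).le (by linarith : (0:ℝ) ≤ Real.exp (x-y) - (x-y+1)),
    mul_nonneg (by linarith : (0:ℝ) ≤ Real.exp R - Real.exp y)
      (by linarith : (0:ℝ) ≤ y - x)]

lemma exp_lip {R x y : ℝ} (hx : x ≤ R) (hy : y ≤ R) :
    |Real.exp x - Real.exp y| ≤ Real.exp R * |x - y| := by
  rcases le_total x y with h | h
  · rw [abs_sub_comm, abs_of_nonneg (by linarith [Real.exp_le_exp.2 h] : (0:ℝ) ≤ Real.exp y - Real.exp x),
      abs_sub_comm, abs_of_nonneg (by linarith : (0:ℝ) ≤ y - x)]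
    exact exp_lip_aux hy h
  · rw [abs_of_nonneg (by linarith [Real.exp_le_exp.2 h] : (0:ℝ) ≤ Real.exp x - Real.exp y),
      abs_of_nonneg (by linarith : (0:ℝ) ≤ x - y)]
    exact exp_lip_aux hx h

noncomputable def vf (l : ℝ) (t : ℝ) (p : ℝ × ℝ) : ℝ × ℝ :=
  (p.2, -Real.exp p.1 - p.2/(l+t))

lemma vf_lip {l a R : ℝ} (b : ℝ) (ha : -l < a) (hR : 0 ≤ R) (t : ℝ) :
    LipschitzOnWith (Real.toNNReal (Real.exp R + 1/(l+a))) (vf l t)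
      {p : ℝ × ℝ | t ∈ Icc a b ∧ p ∈ Metric.closedBall 0 R} := by
  have hla : 0 < l + a := by linarith
  have hK0 : 0 ≤ Real.exp R + 1/(l+a) := by positivity
  have hexp1 : 1 ≤ Real.exp R := Real.one_le_exp hR
  have hinv : (0:ℝ) < 1/(l+a) := by positivity
  apply LipschitzOnWith.of_dist_le_mul
  rintro p ⟨ht, hp⟩ q ⟨-, hq⟩
  have hlt : 0 < l + t := by have := ht.1; linarith
  have hp' : ‖p‖ ≤ R := by rwa [← mem_closedBall_zero_iff]
  have hq' : ‖q‖ ≤ R := by rwa [← mem_closedBall_zero_iff]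
  have hp1 : p.1 ≤ R := le_trans (le_abs_self _)
    (le_trans (by simpa [Real.norm_eq_abs] using norm_fst_le p) hp')
  have hq1 : q.1 ≤ R := le_trans (le_abs_self _)
    (le_trans (by simpa [Real.norm_eq_abs] using norm_fst_le q) hq')
  rw [Real.coe_toNNReal _ hK0, Prod.dist_eq]
  apply max_le
  · calc dist (vf l t p).1 (vf l t q).1 = dist p.2 q.2 := rfl
      _ ≤ dist p q := by rw [Prod.dist_eq]; exact le_max_right _ _
      _ ≤ (Real.exp R + 1/(l+a)) * dist p q := by
          nlinarith [mul_nonneg (by linarith : (0:ℝ) ≤ Real.exp R + 1/(l+a) - 1)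
            (dist_nonneg (x := p) (y := q))]
  · have h1 : |q.1 - p.1| ≤ dist p q := by
      rw [abs_sub_comm, ← Real.dist_eq, Prod.dist_eq]; exact le_max_left _ _
    have h2 : |q.2 - p.2| ≤ dist p q := by
      rw [abs_sub_comm, ← Real.dist_eq, Prod.dist_eq]; exact le_max_right _ _
    calc dist (vf l t p).2 (vf l t q).2
        = |(Real.exp q.1 - Real.exp p.1) + (q.2 - p.2)/(l+t)| := by
          rw [Real.dist_eq]; congr 1; unfold vf; ring
      _ ≤ |Real.exp q.1 - Real.exp p.1| + |(q.2 - p.2)/(l+t)| := abs_add_le _ _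
      _ ≤ Real.exp R * |q.1 - p.1| + |q.2 - p.2|/(l+t) := by
          rw [abs_div, abs_of_pos hlt]
          exact add_le_add (exp_lip hq1 hp1) le_rfl
      _ ≤ Real.exp R * dist p q + (1/(l+a)) * dist p q := by
          have k1 : Real.exp R * |q.1 - p.1| ≤ Real.exp R * dist p q :=
            mul_le_mul_of_nonneg_left h1 (Real.exp_pos R).le
          have k2 : |q.2 - p.2|/(l+t) ≤ (1/(l+a)) * dist p q := by
            have hat : l + a ≤ l + t := by have := ht.1; linarith
            calc |q.2 - p.2|/(l+t) ≤ |q.2 - p.2|/(l+a) := by gcongr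
              _ ≤ dist p q/(l+a) := by gcongr
              _ = (1/(l+a)) * dist p q := by ring
          linarith
      _ = (Real.exp R + 1/(l+a)) * dist p q := by ring

theorem stmt_6 (l : ℝ) (hl : 0 < l) (z : ℝ → ℝ)
    (hz : ContDiffOn ℝ 2 z (Set.Ioi (-l)))
    (heq : ∀ r ∈ Set.Ioi (-l),
      -(deriv (deriv z) r) - deriv z r / (l + r) = Real.exp (z r))
    (hneg : ∀ r ∈ Set.Ioi (-l), z r ≤ 0)
    (h0 : z 0 = 0) (h0' : deriv z 0 = 0) :
    ∀ r ∈ Set.Ioi (-l),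
      z r = Real.log (4 * (Real.sqrt (2 * l ^ 2 + 4)) ^ 2 *
        l ^ (Real.sqrt (2 * l ^ 2 + 4) + 2) *
        (r + l) ^ (Real.sqrt (2 * l ^ 2 + 4) - 2) /
        ((Real.sqrt (2 * l ^ 2 + 4) + 2) * l ^ (Real.sqrt (2 * l ^ 2 + 4)) +
          (Real.sqrt (2 * l ^ 2 + 4) - 2) *
            (r + l) ^ (Real.sqrt (2 * l ^ 2 + 4))) ^ 2) := by
  intro r hr
  set A := Real.sqrt (2 * l ^ 2 + 4) with hAdef
  have hA2 : A ^ 2 = 2 * l ^ 2 + 4 := Real.sq_sqrt (by positivity)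
  have hA : 2 < A := by nlinarith [Real.sqrt_nonneg (2 * l ^ 2 + 4)]
  suffices h : z r = ww l A r by rw [h]; unfold ww dd; norm_num
  have hr' : -l < r := hr
  have hopen : IsOpen (Ioi (-l)) := isOpen_Ioi
  -- derivative facts for z
  have hz1 : ∀ x ∈ Ioi (-l), HasDerivAt z (deriv z x) x := fun x hx =>
    ((hz.contDiffAt (hopen.mem_nhds hx)).differentiableAt (by norm_num)).hasDerivAt
  have hzd : ContDiffOn ℝ 1 (deriv z) (Ioi (-l)) :=
    hz.deriv_of_isOpen hopen (by norm_num)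
  have hz2 : ∀ x ∈ Ioi (-l), HasDerivAt (deriv z) (deriv (deriv z) x) x := fun x hx =>
    ((hzd.contDiffAt (hopen.mem_nhds hx)).differentiableAt (by norm_num)).hasDerivAt
  set F : ℝ → ℝ × ℝ := fun t => (z t, deriv z t) with hF
  set G : ℝ → ℝ × ℝ := fun t => (ww l A t, w1 l A t) with hG
  have hFd : ∀ x ∈ Ioi (-l), HasDerivAt F (vf l x (F x)) x := by
    intro x hx
    have hxx : deriv (deriv z) x = -Real.exp (z x) - deriv z x / (l + x) := by
      have := heq x hx; linarith
    have h := (hz1 x hx).prodMk (hz2 x hx)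
    rw [show vf l x (F x) = (deriv z x, deriv (deriv z) x) by
      simp [vf, hF, hxx]]
    exact h
  have hGd : ∀ x ∈ Ioi (-l), HasDerivAt G (vf l x (G x)) x := by
    intro x hx
    have hxx : w2 l A x = -Real.exp (ww l A x) - w1 l A x / (l + x) := by
      have := ode_ww (r := x) hl hA hA2 hx; linarith
    have h := (hasDerivAt_ww hl hA hx).prodMk (hasDerivAt_w1 hl hA hx)
    rw [show vf l x (G x) = (w1 l A x, w2 l A x) by simp [vf, hG, hxx]]
    exact h
  -- interval
  set a : ℝ := (-l + min r 0) / 2 with hadef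
  set b : ℝ := max r 0 + 1 with hbdef
  have hminl : -l < min r 0 := by
    rcases min_choice r 0 with h | h <;> rw [h] <;> [exact hr'; linarith]
  have hala : -l < a := by rw [hadef]; linarith
  have haminr : a < min r 0 := by rw [hadef]; linarith
  have har : a < r := lt_of_lt_of_le haminr (min_le_left _ _)
  have ha0 : a < 0 := lt_of_lt_of_le haminr (min_le_right _ _)
  have h0b : (0:ℝ) < b := by rw [hbdef]; have := le_max_right r 0; linarith
  have hrb : r < b := by rw [hbdef]; have := le_max_left r 0; linarith
  have hsub : Icc a b ⊆ Ioi (-l) := fun x hx => lt_of_lt_of_le hala hx.1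
  have hsub' : Ioo a b ⊆ Ioi (-l) := fun x hx => lt_of_lt_of_le hala hx.1.le
  -- bounds
  have hFc : ContinuousOn F (Icc a b) :=
    ((hz.continuousOn.mono hsub).prodMk (hzd.continuousOn.mono hsub))
  have hGc : ContinuousOn G (Icc a b) := by
    apply continuousOn_of_forall_continuousAt
    intro x hx
    exact ((hasDerivAt_ww hl hA (hsub hx)).continuousAt).prodMk
      ((hasDerivAt_w1 hl hA (hsub hx)).continuousAt)
  obtain ⟨C, hC⟩ := isCompact_Icc.exists_bound_of_continuousOn hFc
  obtain ⟨C', hC'⟩ := isCompact_Icc.exists_bound_of_continuousOn hGc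
  set R : ℝ := max C C' with hRdef
  have hR : 0 ≤ R := le_trans (norm_nonneg (F 0))
    (le_trans (hC 0 ⟨ha0.le, h0b.le⟩) (le_max_left _ _))
  -- apply uniqueness
  have key : EqOn F G (Ioo a b) := by
    apply ODE_solution_unique_of_mem_Ioo
      (v := vf l) (K := Real.toNNReal (Real.exp R + 1/(l+a)))
      (s := fun t => {p : ℝ × ℝ | t ∈ Icc a b ∧ p ∈ Metric.closedBall 0 R})
      (fun t _ => vf_lip b hala hR t) (t₀ := 0) ⟨ha0, h0b⟩
    · intro t ht
      refine ⟨hFd t (hsub' ht), Ioo_subset_Icc_self ht, ?_⟩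
      rw [Metric.mem_closedBall, dist_zero_right]
      exact le_trans (hC t (Ioo_subset_Icc_self ht)) (le_max_left _ _)
    · intro t ht
      refine ⟨hGd t (hsub' ht), Ioo_subset_Icc_self ht, ?_⟩
      rw [Metric.mem_closedBall, dist_zero_right]
      exact le_trans (hC' t (Ioo_subset_Icc_self ht)) (le_max_right _ _)
    · rw [hF, hG]
      simp only
      rw [h0, h0', ww_zero hl hA, w1_zero hl hA]
  have := key ⟨har, hrb⟩
  rw [hF, hG] at this
  exact congrArg Prod.fst this
end

section
/- Every C² function z : (0,∞) → ℝ, continuously extendable to [0,∞), that satisfies -z'' - z'/r = e^z on (0,∞) with z ≤ 0, z(0) = 0 and z'(0+) = 0 equals z(r) = log(64/(8+r²)²). -/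
open Filter MeasureTheory intervalIntegral Set

/-! Auxiliary: the explicit solution -/

noncomputable def solAux (r : ℝ) : ℝ := Real.log 64 - 2 * Real.log (8 + r ^ 2)

lemma solAux_den_pos (r : ℝ) : (0:ℝ) < 8 + r ^ 2 := by positivity

lemma solAux_eq (r : ℝ) : solAux r = Real.log (64 / (8 + r ^ 2) ^ 2) := by
  rw [Real.log_div (by norm_num) (by positivity), Real.log_pow, solAux]
  push_cast; ring

lemma solAux_continuous : Continuous solAux := by
  apply continuous_iff_continuousAt.2
  intro x
  have hin : ContinuousAt (fun x : ℝ => 8 + x ^ 2) x := by fun_prop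
  have hlog : ContinuousAt (fun x : ℝ => Real.log (8 + x ^ 2)) x :=
    hin.log (solAux_den_pos x).ne' 
  exact continuousAt_const.sub (hlog.const_mul 2)

lemma solAux_zero : solAux 0 = 0 := by
  rw [solAux, show (64:ℝ) = 8 ^ 2 by norm_num, Real.log_pow]
  norm_num

lemma solAux_nonpos (r : ℝ) : solAux r ≤ 0 := by
  have h64 : Real.log 64 = 2 * Real.log 8 := by
    rw [show (64:ℝ) = 8 ^ 2 by norm_num, Real.log_pow]; push_cast; ring
  have h := Real.log_le_log (by norm_num : (0:ℝ) < 8) (by nlinarith : (8:ℝ) ≤ 8 + r ^ 2)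
  rw [solAux, h64]; linarith

lemma exp_solAux (r : ℝ) : Real.exp (solAux r) = 64 / (8 + r ^ 2) ^ 2 := by
  have h2 : (2:ℝ) * Real.log (8 + r ^ 2) = Real.log ((8 + r ^ 2) ^ 2) := by
    rw [Real.log_pow]; push_cast; ring
  rw [solAux, h2, Real.exp_sub, Real.exp_log (by norm_num), Real.exp_log (by positivity)]

lemma solAux_hasDeriv (r : ℝ) : HasDerivAt solAux (-(4 * r) / (8 + r ^ 2)) r := by
  have h : HasDerivAt (fun y : ℝ => 8 + y ^ 2) (2 * r) r := by
    simpa using ((hasDerivAt_pow 2 r).const_add 8)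
  have h2 := (h.log (solAux_den_pos r).ne').const_mul 2
  have h3 := h2.const_sub (Real.log 64)
  refine h3.congr_deriv ?_
  ring

lemma solAux_deriv (r : ℝ) : deriv solAux r = -(4 * r) / (8 + r ^ 2) :=
  (solAux_hasDeriv r).deriv

lemma solAux_deriv_cont : Continuous (deriv solAux) := by
  have : deriv solAux = fun r => -(4 * r) / (8 + r ^ 2) := funext solAux_deriv
  rw [this]
  exact Continuous.div (by continuity) (by continuity) (fun x => (solAux_den_pos x).ne')

lemma solAux_I1 (r : ℝ) (hr : 0 < r) :
    r * deriv solAux r = -∫ s in (0:ℝ)..r, s * Real.exp (solAux s) := by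
  have hF : ∀ s : ℝ, HasDerivAt (fun t => 4 * t ^ 2 / (8 + t ^ 2)) (s * Real.exp (solAux s)) s := by
    intro s
    have h1 : HasDerivAt (fun t : ℝ => 4 * t ^ 2) (8 * s) s := by
      have := (hasDerivAt_pow 2 s).const_mul (4:ℝ)
      refine this.congr_deriv ?_
      ring
    have h2 : HasDerivAt (fun t : ℝ => 8 + t ^ 2) (2 * s) s := by
      simpa using ((hasDerivAt_pow 2 s).const_add 8)
    have h3 := h1.div h2 (solAux_den_pos s).ne'
    refine h3.congr_deriv ?_
    rw [exp_solAux]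
    field_simp; ring
  have hint : IntervalIntegrable (fun s => s * Real.exp (solAux s)) volume 0 r :=
    (continuous_id.mul (Real.continuous_exp.comp solAux_continuous)).intervalIntegrable 0 r
  have hFc : Continuous fun t : ℝ => 4 * t ^ 2 / (8 + t ^ 2) :=
    Continuous.div (by fun_prop) (by fun_prop) (fun x => (solAux_den_pos x).ne')
  have := intervalIntegral.integral_eq_sub_of_hasDerivAt_of_le hr.le
    hFc.continuousOn (fun x _ => hF x) hint
  rw [this, solAux_deriv]
  norm_num
  ring

lemma solAux_I2 (r : ℝ) (hr : 0 < r) : solAux r = ∫ t in (0:ℝ)..r, deriv solAux t := by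
  have := intervalIntegral.integral_eq_sub_of_hasDerivAt_of_le hr.le
    solAux_continuous.continuousOn
    (fun x _ => (solAux_hasDeriv x).congr_deriv (solAux_deriv x).symm)
    (solAux_deriv_cont.intervalIntegrable 0 r)
  rw [this, solAux_zero, sub_zero]

lemma solAux_deriv_bd (t : ℝ) (ht : 0 < t) : |deriv solAux t| ≤ t / 2 := by
  rw [solAux_deriv, abs_div, abs_of_pos (solAux_den_pos t), abs_neg, abs_of_pos (by positivity : (0:ℝ) < 4 * t)]
  rw [div_le_iff₀ (solAux_den_pos t)]
  nlinarith [sq_nonneg t, sq_nonneg (t - 2)]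

/-! exp is 1-Lipschitz on nonpositive reals -/

lemma exp_sub_le_of_nonpos {a b : ℝ} (ha : a ≤ 0) (h : b ≤ a) :
    Real.exp a - Real.exp b ≤ a - b := by
  have h1 : Real.exp b = Real.exp (b - a) * Real.exp a := by
    rw [← Real.exp_add]; ring_nf
  have h2 : b - a + 1 ≤ Real.exp (b - a) := Real.add_one_le_exp _
  have h3 : Real.exp a ≤ 1 := Real.exp_le_one_iff.2 ha
  nlinarith [Real.exp_pos a, mul_le_mul_of_nonneg_left h2 (Real.exp_pos a).le,
    mul_le_mul_of_nonneg_left h3 (sub_nonneg.2 h)]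

lemma exp_lip_of_nonpos {a b : ℝ} (ha : a ≤ 0) (hb : b ≤ 0) :
    |Real.exp a - Real.exp b| ≤ |a - b| := by
  rcases le_total b a with h | h
  · rw [abs_of_nonneg (sub_nonneg.2 (Real.exp_le_exp.2 h)), abs_of_nonneg (sub_nonneg.2 h)]
    exact exp_sub_le_of_nonpos ha h
  · rw [abs_sub_comm, abs_sub_comm a b,
      abs_of_nonneg (sub_nonneg.2 (Real.exp_le_exp.2 h)), abs_of_nonneg (sub_nonneg.2 h)]
    exact exp_sub_le_of_nonpos hb h

/-! integral comparison using values on Ioc only -/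

lemma integral_mono_Ioc {f g : ℝ → ℝ} {r : ℝ} (hr : 0 ≤ r)
    (hf : IntervalIntegrable f volume 0 r) (hg : IntervalIntegrable g volume 0 r)
    (h : ∀ t ∈ Ioc (0:ℝ) r, f t ≤ g t) :
    ∫ t in (0:ℝ)..r, f t ≤ ∫ t in (0:ℝ)..r, g t := by
  apply intervalIntegral.integral_mono_ae_restrict hr hf hg
  have : volume.restrict (Icc (0:ℝ) r) = volume.restrict (Ioc (0:ℝ) r) :=
    Measure.restrict_congr_set Ioc_ae_eq_Icc.symm
  rw [this, Filter.EventuallyLE, ae_restrict_iff' measurableSet_Ioc]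
  exact ae_of_all _ h

theorem stmt_7 (z : ℝ → ℝ)
    (hz : ContDiffOn ℝ 2 z (Set.Ioi (0 : ℝ)))
    (hcont : ContinuousWithinAt z (Set.Ici (0 : ℝ)) 0)
    (heq : ∀ r ∈ Set.Ioi (0 : ℝ),
      -(deriv (deriv z) r) - deriv z r / r = Real.exp (z r))
    (hneg : ∀ r ∈ Set.Ioi (0 : ℝ), z r ≤ 0)
    (h0 : z 0 = 0)
    (h0' : Tendsto (deriv z) (nhdsWithin 0 (Set.Ioi (0 : ℝ))) (nhds 0)) :
    ∀ r ∈ Set.Ioi (0 : ℝ), z r = Real.log (64 / (8 + r ^ 2) ^ 2) := by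
  -- continuity of z on [0,∞)
  have hzc : ContinuousOn z (Ici 0) := by
    intro x hx
    rcases eq_or_lt_of_le (mem_Ici.mp hx) with h | h
    · rw [← h]; exact hcont
    · exact ((hz.continuousOn x h).continuousAt (Ioi_mem_nhds h)).continuousWithinAt
  -- derivatives
  have hd1 : ∀ r ∈ Ioi (0:ℝ), HasDerivAt z (deriv z r) r := by
    intro r hr
    exact (((hz.differentiableOn (by norm_num)) r hr).differentiableAt
      (isOpen_Ioi.mem_nhds hr)).hasDerivAt
  have hcd1 : ContDiffOn ℝ 1 (deriv z) (Ioi 0) :=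
    hz.deriv_of_isOpen isOpen_Ioi (by norm_num)
  have hd2 : ∀ r ∈ Ioi (0:ℝ), HasDerivAt (deriv z) (deriv (deriv z) r) r := by
    intro r hr
    exact (((hcd1.differentiableOn (by norm_num)) r hr).differentiableAt
      (isOpen_Ioi.mem_nhds hr)).hasDerivAt
  -- integral identity I1 : r z'(r) = -∫₀ʳ s e^{z s}
  have hexpint : ∀ r : ℝ, 0 < r →
      IntervalIntegrable (fun s => s * Real.exp (z s)) volume 0 r := by
    intro r hr
    apply ContinuousOn.intervalIntegrable
    rw [uIcc_of_le hr.le]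
    exact continuousOn_id.mul
      (Real.continuous_exp.comp_continuousOn (hzc.mono Icc_subset_Ici_self))
  have hI1 : ∀ r ∈ Ioi (0:ℝ),
      r * deriv z r = -∫ s in (0:ℝ)..r, s * Real.exp (z s) := by
    intro r hr
    set u : ℝ → ℝ := fun t => t * deriv z t with hu
    have hucont : ContinuousOn u (Icc 0 r) := by
      intro x hx
      rcases eq_or_lt_of_le hx.1 with h | h
      · rw [← h]
        apply ContinuousWithinAt.mono _ (Icc_subset_Ici_self : Icc (0:ℝ) r ⊆ Ici 0)
        rw [← continuousWithinAt_Ioi_iff_Ici]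
        have : Tendsto u (nhdsWithin 0 (Ioi 0)) (nhds (0 * 0)) :=
          (tendsto_id.mono_left nhdsWithin_le_nhds).mul h0'
        simpa [u, ContinuousWithinAt] using this
      · exact (continuousAt_id.mul
          ((hcd1.continuousOn.continuousAt (Ioi_mem_nhds h)))).continuousWithinAt
    have hderivu : ∀ x ∈ Ioo (0:ℝ) r, HasDerivAt u (-(x * Real.exp (z x))) x := by
      intro x hx
      have h := (hasDerivAt_id x).mul (hd2 x hx.1)
      have hzz : deriv (deriv z) x = -(deriv z x / x) - Real.exp (z x) := by
        have := heq x hx.1; linarith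
      have hx0 : x ≠ 0 := ne_of_gt hx.1
      refine h.congr_deriv ?_
      rw [hzz, id_eq]
      field_simp
      ring
    have hint : IntervalIntegrable (fun s => -(s * Real.exp (z s))) volume 0 r :=
      (hexpint r hr).neg
    have := intervalIntegral.integral_eq_sub_of_hasDerivAt_of_le hr.le hucont hderivu hint
    rw [intervalIntegral.integral_neg] at this
    simp only [hu] at this
    have h2 : (0:ℝ) * deriv z 0 = 0 := by ring
    rw [h2, sub_zero] at this
    linarith
  -- pointwise bound for the inner integral
  have hinner_bd : ∀ t : ℝ, 0 < t →
      |∫ s in (0:ℝ)..t, s * Real.exp (z s)| ≤ t ^ 2 / 2 := by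
    intro t ht
    have h1 : (0:ℝ) ≤ ∫ s in (0:ℝ)..t, s * Real.exp (z s) :=
      intervalIntegral.integral_nonneg ht.le
        (fun s hs => mul_nonneg hs.1 (Real.exp_pos _).le)
    have h2 : (∫ s in (0:ℝ)..t, s * Real.exp (z s)) ≤ ∫ s in (0:ℝ)..t, s := by
      apply integral_mono_Ioc ht.le (hexpint t ht)
        ((by fun_prop : Continuous (fun s : ℝ => s)).intervalIntegrable 0 t)
      intro s hs
      have h1 : Real.exp (z s) ≤ 1 := Real.exp_le_one_iff.2 (hneg s hs.1)
      have h2 : (0:ℝ) < Real.exp (z s) := Real.exp_pos _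
      nlinarith [hs.1]
    rw [abs_of_nonneg h1]
    calc (∫ s in (0:ℝ)..t, s * Real.exp (z s)) ≤ ∫ s in (0:ℝ)..t, s := h2
      _ = t ^ 2 / 2 := by rw [integral_id]; ring
  have hbd : ∀ t : ℝ, 0 < t → |deriv z t| ≤ t / 2 := by
    intro t ht
    have h := hI1 t ht
    have : |t * deriv z t| ≤ t ^ 2 / 2 := by
      rw [h, abs_neg]; exact hinner_bd t ht
    rw [abs_mul, abs_of_pos ht] at this
    rw [← mul_le_mul_iff_right₀ ht]
    calc t * |deriv z t| ≤ t ^ 2 / 2 := this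
      _ = t * (t / 2) := by ring
  -- interval integrability of deriv z
  have hintd : ∀ r : ℝ, 0 < r → IntervalIntegrable (deriv z) volume 0 r := by
    intro r hr
    rw [intervalIntegrable_iff_integrableOn_Ioc_of_le hr.le]
    apply Integrable.mono' (g := fun _ => r / 2)
      (integrableOn_const measure_Ioc_lt_top.ne)
      ((measurable_deriv z).aestronglyMeasurable.restrict)
    rw [ae_restrict_iff' measurableSet_Ioc]
    refine ae_of_all _ fun t ht => ?_
    calc ‖deriv z t‖ = |deriv z t| := rfl
      _ ≤ t / 2 := hbd t ht.1
      _ ≤ r / 2 := by linarith [ht.2]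
  -- integral identity I2 : z r = ∫₀ʳ z'
  have hI2 : ∀ r ∈ Ioi (0:ℝ), z r = ∫ t in (0:ℝ)..r, deriv z t := by
    intro r hr
    have := intervalIntegral.integral_eq_sub_of_hasDerivAt_of_le hr.le
      (hzc.mono Icc_subset_Ici_self) (fun x hx => hd1 x hx.1) (hintd r hr)
    rw [this, h0, sub_zero]
  -- bound |z r| ≤ r²/4 not needed separately; go to main induction
  intro R hR
  have hRpos : (0:ℝ) < R := hR
  rw [← solAux_eq]
  -- difference function facts
  have hDint : ∀ r : ℝ, 0 < r →
      IntervalIntegrable (fun t => deriv z t - deriv solAux t) volume 0 r :=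
    fun r hr => (hintd r hr).sub (solAux_deriv_cont.intervalIntegrable 0 r)
  have hdiff : ∀ r ∈ Ioi (0:ℝ),
      z r - solAux r = ∫ t in (0:ℝ)..r, (deriv z t - deriv solAux t) := by
    intro r hr
    rw [intervalIntegral.integral_sub (hintd r hr)
      (solAux_deriv_cont.intervalIntegrable 0 r), ← hI2 r hr, ← solAux_I2 r hr]
  -- main induction
  have key : ∀ n : ℕ, ∀ r : ℝ, 0 < r → r ≤ R →
      |z r - solAux r| ≤ R ^ 2 / 2 / (4 ^ n * n.factorial) * r ^ (2 * n) := by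
    intro n
    induction n with
    | zero =>
      intro r hr hrR
      -- |z r| ≤ r²/4 and |solAux r| ≤ r²/4
      have hz4 : |z r| ≤ r ^ 2 / 4 := by
        rw [hI2 r hr]
        calc |∫ t in (0:ℝ)..r, deriv z t| ≤ ∫ t in (0:ℝ)..r, |deriv z t| := by
              simpa only [Real.norm_eq_abs] using
                intervalIntegral.norm_integral_le_integral_norm (f := deriv z) hr.le
          _ ≤ ∫ t in (0:ℝ)..r, t / 2 := by
              apply integral_mono_Ioc hr.le (hintd r hr).abs
                (by apply ContinuousOn.intervalIntegrable; fun_prop)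
              exact fun t ht => hbd t ht.1
          _ = r ^ 2 / 4 := by
              rw [intervalIntegral.integral_div, integral_id]; ring
      have hg4 : |solAux r| ≤ r ^ 2 / 4 := by
        rw [solAux_I2 r hr]
        calc |∫ t in (0:ℝ)..r, deriv solAux t| ≤ ∫ t in (0:ℝ)..r, |deriv solAux t| := by
              simpa only [Real.norm_eq_abs] using
                intervalIntegral.norm_integral_le_integral_norm (f := deriv solAux) hr.le
          _ ≤ ∫ t in (0:ℝ)..r, t / 2 := by
              apply integral_mono_Ioc hr.le
                ((solAux_deriv_cont.intervalIntegrable 0 r).abs)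
                (by apply ContinuousOn.intervalIntegrable; fun_prop)
              exact fun t ht => solAux_deriv_bd t ht.1
          _ = r ^ 2 / 4 := by
              rw [intervalIntegral.integral_div, integral_id]; ring
      calc |z r - solAux r| ≤ |z r| + |solAux r| := abs_sub _ _
        _ ≤ r ^ 2 / 4 + r ^ 2 / 4 := add_le_add hz4 hg4
        _ = r ^ 2 / 2 := by ring
        _ ≤ R ^ 2 / 2 := by nlinarith
        _ = R ^ 2 / 2 / (4 ^ 0 * (Nat.factorial 0 : ℝ)) * r ^ (2 * 0) := by norm_num
    | succ n ih =>
      intro r hr hrR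
      set A : ℝ := R ^ 2 / 2 / (4 ^ n * n.factorial) with hA
      have hApos : 0 < A := by
        apply div_pos (by positivity)
        positivity
      -- bound on D t for t ∈ (0, r]
      have hD : ∀ t : ℝ, 0 < t → t ≤ r →
          |deriv z t - deriv solAux t| ≤ A / (2 * (n:ℝ) + 2) * t ^ (2 * n + 1) := by
        intro t ht htr
        have hid : t * (deriv z t - deriv solAux t)
            = -∫ s in (0:ℝ)..t, s * (Real.exp (z s) - Real.exp (solAux s)) := by
          have h1 := hI1 t ht
          have h2 := solAux_I1 t ht
          have h3 : (∫ s in (0:ℝ)..t, s * (Real.exp (z s) - Real.exp (solAux s)))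
              = (∫ s in (0:ℝ)..t, s * Real.exp (z s))
                - ∫ s in (0:ℝ)..t, s * Real.exp (solAux s) := by
            have hgint : IntervalIntegrable (fun s => s * Real.exp (solAux s)) volume 0 t := by
              exact (continuous_id.mul (Real.continuous_exp.comp solAux_continuous)).intervalIntegrable 0 t
            rw [← intervalIntegral.integral_sub (hexpint t ht) hgint]
            congr 1; funext s; ring
          rw [h3]; rw [mul_sub, h1, h2]; ring
        have hptwise : ∀ s ∈ Ioc (0:ℝ) t,
            |s * (Real.exp (z s) - Real.exp (solAux s))| ≤ A * s ^ (2 * n + 1) := by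
          intro s hs
          have hsR : s ≤ R := le_trans hs.2 (le_trans htr hrR)
          have hlip := exp_lip_of_nonpos (hneg s hs.1) (solAux_nonpos s)
          have hih := ih s hs.1 hsR
          rw [abs_mul, abs_of_pos hs.1]
          calc s * |Real.exp (z s) - Real.exp (solAux s)| ≤ s * |z s - solAux s| :=
                mul_le_mul_of_nonneg_left hlip hs.1.le
            _ ≤ s * (A * s ^ (2 * n)) := mul_le_mul_of_nonneg_left hih hs.1.le
            _ = A * s ^ (2 * n + 1) := by ring
        have hintegr : IntervalIntegrable
            (fun s => |s * (Real.exp (z s) - Real.exp (solAux s))|) volume 0 t := by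
          apply ContinuousOn.intervalIntegrable
          rw [uIcc_of_le ht.le]
          apply ContinuousOn.abs
          apply continuousOn_id.mul
          apply ContinuousOn.sub
          · exact Real.continuous_exp.comp_continuousOn (hzc.mono Icc_subset_Ici_self)
          · exact (Real.continuous_exp.comp solAux_continuous).continuousOn
        have habs : |t * (deriv z t - deriv solAux t)| ≤ A * t ^ (2 * n + 2) / (2 * n + 2) := by
          rw [hid, abs_neg]
          calc |∫ s in (0:ℝ)..t, s * (Real.exp (z s) - Real.exp (solAux s))|
              ≤ ∫ s in (0:ℝ)..t, |s * (Real.exp (z s) - Real.exp (solAux s))| := by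
                simpa only [Real.norm_eq_abs] using
                  intervalIntegral.norm_integral_le_integral_norm
                    (f := fun s => s * (Real.exp (z s) - Real.exp (solAux s))) ht.le
            _ ≤ ∫ s in (0:ℝ)..t, A * s ^ (2 * n + 1) := by
                apply integral_mono_Ioc ht.le hintegr
                  (by apply Continuous.intervalIntegrable; fun_prop)
                exact hptwise
            _ = A * t ^ (2 * n + 2) / (2 * n + 2) := by
                rw [intervalIntegral.integral_const_mul, integral_pow]
                push_cast; ring
        rw [abs_mul, abs_of_pos ht] at habs
        rw [← mul_le_mul_iff_right₀ ht]
        calc t * |deriv z t - deriv solAux t| ≤ A * t ^ (2 * n + 2) / (2 * n + 2) := habs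
          _ = t * (A / (2 * (n:ℝ) + 2) * t ^ (2 * n + 1)) := by ring
      -- integrate the bound
      have hDabs_int : IntervalIntegrable
          (fun t => |deriv z t - deriv solAux t|) volume 0 r := (hDint r hr).abs
      have hstep : |z r - solAux r| ≤ A * r ^ (2 * n + 2) / (2 * n + 2) ^ 2 := by
        rw [hdiff r hr]
        calc |∫ t in (0:ℝ)..r, (deriv z t - deriv solAux t)|
            ≤ ∫ t in (0:ℝ)..r, |deriv z t - deriv solAux t| := by
              simpa only [Real.norm_eq_abs] using
                intervalIntegral.norm_integral_le_integral_norm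
                  (f := fun t => deriv z t - deriv solAux t) hr.le
          _ ≤ ∫ t in (0:ℝ)..r, A / (2 * (n:ℝ) + 2) * t ^ (2 * n + 1) := by
              apply integral_mono_Ioc hr.le hDabs_int
                (by apply Continuous.intervalIntegrable; fun_prop)
              exact fun t ht => hD t ht.1 ht.2
          _ = A * r ^ (2 * n + 2) / (2 * n + 2) ^ 2 := by
              have c1 : ((2:ℝ) * n + 2) ≠ 0 := by positivity
              rw [intervalIntegral.integral_const_mul, integral_pow]
              push_cast
              field_simp
              ring
      -- arithmetic to match the required form
      have hfact : (0:ℝ) < (n.factorial : ℝ) := by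
        exact_mod_cast n.factorial_pos
      have harith : A * r ^ (2 * n + 2) / (2 * n + 2) ^ 2
          ≤ R ^ 2 / 2 / (4 ^ (n + 1) * (n + 1).factorial) * r ^ (2 * (n + 1)) := by
        have hA' : A * r ^ (2 * n + 2) / (2 * n + 2) ^ 2
            = (R ^ 2 / 2) * r ^ (2 * n + 2)
              / ((4 ^ n * n.factorial) * ((2 * (n:ℝ) + 2) ^ 2)) := by
          have c1 : ((2:ℝ) * n + 2) ≠ 0 := by positivity
          have c2 : ((4:ℝ) ^ n) ≠ 0 := by positivity
          have c3 : ((n.factorial : ℝ)) ≠ 0 := by positivity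
          rw [hA]
          field_simp
          try ring
        have hB : R ^ 2 / 2 / (4 ^ (n + 1) * (n + 1).factorial) * r ^ (2 * (n + 1))
            = (R ^ 2 / 2) * r ^ (2 * n + 2) / (4 ^ (n + 1) * ((n + 1).factorial : ℝ)) := by
          rw [show 2 * (n + 1) = 2 * n + 2 from by ring]; ring
        rw [hA', hB]
        have h2 : (0:ℝ) < 4 ^ n := by positivity
        have h3 : (0:ℝ) ≤ (n:ℝ) := Nat.cast_nonneg n
        have hden : (4:ℝ) ^ (n + 1) * ((n + 1).factorial : ℝ)
            ≤ (4 ^ n * n.factorial) * ((2 * (n:ℝ) + 2) ^ 2) := by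
          have h1 : ((n+1).factorial : ℝ) = (n.factorial : ℝ) * ((n:ℝ) + 1) := by
            rw [Nat.factorial_succ]; push_cast; ring
          rw [h1, pow_succ]
          nlinarith [mul_nonneg (mul_nonneg (mul_nonneg h2.le hfact.le)
            (by linarith : (0:ℝ) ≤ (n:ℝ) + 1)) h3]
        apply div_le_div_of_nonneg_left (by positivity) (by positivity) hden
      exact le_trans hstep harith
  -- take the limit n → ∞
  have hlim : Tendsto (fun n : ℕ => R ^ 2 / 2 * ((R ^ 2 / 4) ^ n / n.factorial))
      atTop (nhds 0) := by
    have := (FloorSemiring.tendsto_pow_div_factorial_atTop (R ^ 2 / 4)).const_mul (R ^ 2 / 2)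
    simpa using this
  have hle : ∀ n : ℕ, |z R - solAux R| ≤ R ^ 2 / 2 * ((R ^ 2 / 4) ^ n / n.factorial) := by
    intro n
    have h := key n R hRpos le_rfl
    have : R ^ 2 / 2 / (4 ^ n * n.factorial) * R ^ (2 * n)
        = R ^ 2 / 2 * ((R ^ 2 / 4) ^ n / n.factorial) := by
      have c2 : ((4:ℝ) ^ n) ≠ 0 := by positivity
      have c3 : ((n.factorial : ℝ)) ≠ 0 := by positivity
      rw [pow_mul, div_pow]
      field_simp
      try ring
    rwa [this] at h
  have hzero : |z R - solAux R| ≤ 0 := ge_of_tendsto' hlim hle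
  have : z R - solAux R = 0 := abs_nonpos_iff.1 hzero
  linarith
end

section
/- Every solution φ of the linear inhomogeneous ODE -φ'' - φ'/r = e^{z}(φ + (αβ/2) z) on (0,∞) with z(r) = log(64/(8+r²)²), continuously extendable to [0,∞) with φ(0) = 0, is given by φ(r) = αβ ( log(8+r²) + 8/(8+r²) − 1 − log 8 ). -/
noncomputable def stmt8psi (c a b r : ℝ) : ℝ :=
  c*(Real.log (8+r^2) + 8/(8+r^2) - 1 - Real.log 8)
  + a*((8-r^2)/(8+r^2))
  + b*((8-r^2)/(8+r^2)*Real.log r + 16/(8+r^2))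

noncomputable def stmt8psid (c a b r : ℝ) : ℝ :=
  c*(2*r^3/(8+r^2)^2)
  + a*(-32*r/(8+r^2)^2)
  + b*(-32*r/(8+r^2)^2*Real.log r + (8-r^2)/((8+r^2)*r) - 32*r/(8+r^2)^2)

noncomputable def stmt8psidd (c a b r : ℝ) : ℝ :=
  c*((48*r^2-2*r^4)/(8+r^2)^3)
  + a*((96*r^2-256)/(8+r^2)^3)
  + b*((96*r^2-256)/(8+r^2)^3*Real.log r - 32/(8+r^2)^2
      + (r^4-32*r^2-64)/((8+r^2)^2*r^2) + (96*r^2-256)/(8+r^2)^3)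

lemma stmt8_den_pos (r : ℝ) : (0:ℝ) < 8 + r^2 := by positivity

lemma stmt8_hasDeriv1 (c a b : ℝ) {r : ℝ} (hr : 0 < r) :
    HasDerivAt (stmt8psi c a b) (stmt8psid c a b r) r := by
  have hd : (8:ℝ) + r^2 ≠ 0 := (stmt8_den_pos r).ne'
  have h8 : HasDerivAt (fun r : ℝ => 8 + r^2) (2*r) r := by
    simpa using ((hasDerivAt_pow 2 r).const_add 8)
  have hlog : HasDerivAt (fun r : ℝ => Real.log (8+r^2)) (2*r/(8+r^2)) r := by
    simpa [div_eq_mul_inv, mul_comm, Function.comp_def] using (Real.hasDerivAt_log hd).comp r h8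
  have hinv : HasDerivAt (fun r : ℝ => 8/(8+r^2)) (-(8*(2*r))/(8+r^2)^2) r := by
    simpa using (hasDerivAt_const r (8:ℝ)).fun_div h8 hd
  have hu1 : HasDerivAt (fun r : ℝ => (8-r^2)/(8+r^2)) (-32*r/(8+r^2)^2) r := by
    have hn : HasDerivAt (fun r : ℝ => 8 - r^2) (-(2*r)) r := by
      simpa using ((hasDerivAt_pow 2 r).const_sub 8)
    have : HasDerivAt (fun r : ℝ => (8-r^2)/(8+r^2)) _ r := hn.fun_div h8 hd
    convert this using 1
    field_simp
    ring
  have hlr : HasDerivAt Real.log r⁻¹ r := Real.hasDerivAt_log hr.ne'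
  have h16 : HasDerivAt (fun r : ℝ => 16/(8+r^2)) (-(16*(2*r))/(8+r^2)^2) r := by
    simpa using (hasDerivAt_const r (16:ℝ)).fun_div h8 hd
  have hu2 : HasDerivAt (fun r : ℝ => (8-r^2)/(8+r^2)*Real.log r + 16/(8+r^2))
      (-32*r/(8+r^2)^2*Real.log r + (8-r^2)/((8+r^2)*r) - 32*r/(8+r^2)^2) r := by
    have : HasDerivAt (fun r : ℝ => (8-r^2)/(8+r^2)*Real.log r + 16/(8+r^2)) _ r :=
      (hu1.fun_mul hlr).fun_add h16
    convert this using 1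
    field_simp
    ring
  have hF : HasDerivAt (fun r : ℝ => Real.log (8+r^2) + 8/(8+r^2) - 1 - Real.log 8)
      (2*r/(8+r^2) + -(8*(2*r))/(8+r^2)^2) r := by
    simpa using ((hlog.add hinv).sub_const 1).sub_const (Real.log 8)
  have : HasDerivAt (stmt8psi c a b)
      (c*(2*r/(8+r^2) + -(8*(2*r))/(8+r^2)^2) + a*(-32*r/(8+r^2)^2)
        + b*(-32*r/(8+r^2)^2*Real.log r + (8-r^2)/((8+r^2)*r) - 32*r/(8+r^2)^2)) r :=
    ((hF.const_mul c).add (hu1.const_mul a)).add (hu2.const_mul b)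
  convert this using 1
  unfold stmt8psid
  field_simp
  ring

lemma stmt8_hasDeriv2 (c a b : ℝ) {r : ℝ} (hr : 0 < r) :
    HasDerivAt (stmt8psid c a b) (stmt8psidd c a b r) r := by
  have hd : (8:ℝ) + r^2 ≠ 0 := (stmt8_den_pos r).ne'
  have hd2 : ((8:ℝ) + r^2)^2 ≠ 0 := pow_ne_zero _ hd
  have hrne : r ≠ 0 := hr.ne'
  have h8 : HasDerivAt (fun r : ℝ => 8 + r^2) (2*r) r := by
    simpa using ((hasDerivAt_pow 2 r).const_add 8)
  have h8sq : HasDerivAt (fun r : ℝ => ((8:ℝ)+r^2)^2) (2*(8+r^2)*(2*r)) r := by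
    have := (h8.fun_pow 2)
    simpa [mul_comm, mul_assoc, mul_left_comm] using this
  -- derivative of 2r^3/(8+r^2)^2
  have hA : HasDerivAt (fun r : ℝ => 2*r^3/(8+r^2)^2)
      ((2*(3*r^2)*(8+r^2)^2 - 2*r^3*(2*(8+r^2)*(2*r)))/((8+r^2)^2)^2) r := by
    have hn : HasDerivAt (fun r : ℝ => 2*r^3) (2*(3*r^2)) r := by
      simpa using ((hasDerivAt_pow 3 r).const_mul 2)
    exact hn.div h8sq hd2
  -- derivative of -32r/(8+r^2)^2  (call value B r)
  have hB : HasDerivAt (fun r : ℝ => -32*r/(8+r^2)^2)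
      ((-32*(8+r^2)^2 - (-32*r)*(2*(8+r^2)*(2*r)))/((8+r^2)^2)^2) r := by
    have hn : HasDerivAt (fun r : ℝ => -32*r) (-32) r := by
      simpa using (hasDerivAt_id r).const_mul (-32 : ℝ)
    simpa using hn.fun_div h8sq hd2
  have hlr : HasDerivAt Real.log r⁻¹ r := Real.hasDerivAt_log hrne
  -- derivative of (8-r^2)/((8+r^2)*r)
  have hC : HasDerivAt (fun r : ℝ => (8-r^2)/((8+r^2)*r))
      ((-(2*r)*((8+r^2)*r) - (8-r^2)*((2*r)*r + (8+r^2)*1))/((8+r^2)*r)^2) r := by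
    have hn : HasDerivAt (fun r : ℝ => 8 - r^2) (-(2*r)) r := by
      simpa using ((hasDerivAt_pow 2 r).const_sub 8)
    have hden : HasDerivAt (fun r : ℝ => (8+r^2)*r) ((2*r)*r + (8+r^2)*1) r :=
      h8.mul (hasDerivAt_id r)
    exact hn.div hden (by positivity)
  have hb : HasDerivAt (fun r : ℝ => -32*r/(8+r^2)^2*Real.log r + (8-r^2)/((8+r^2)*r) - 32*r/(8+r^2)^2)
      (((-32*(8+r^2)^2 - (-32*r)*(2*(8+r^2)*(2*r)))/((8+r^2)^2)^2)*Real.log r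
        + (-32*r/(8+r^2)^2)*r⁻¹
        + (-(2*r)*((8+r^2)*r) - (8-r^2)*((2*r)*r + (8+r^2)*1))/((8+r^2)*r)^2
        - (32*(8+r^2)^2 - (32*r)*(2*(8+r^2)*(2*r)))/((8+r^2)^2)^2) r := by
    have h32 : HasDerivAt (fun r : ℝ => 32*r/(8+r^2)^2)
        ((32*(8+r^2)^2 - (32*r)*(2*(8+r^2)*(2*r)))/((8+r^2)^2)^2) r := by
      have hn : HasDerivAt (fun r : ℝ => 32*r) (32) r := by
        simpa using (hasDerivAt_id r).const_mul (32 : ℝ)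
      simpa using hn.fun_div h8sq hd2
    exact ((hB.mul hlr).add hC).sub h32
  have : HasDerivAt (stmt8psid c a b)
      (c*((2*(3*r^2)*(8+r^2)^2 - 2*r^3*(2*(8+r^2)*(2*r)))/((8+r^2)^2)^2)
        + a*((-32*(8+r^2)^2 - (-32*r)*(2*(8+r^2)*(2*r)))/((8+r^2)^2)^2)
        + b*(((-32*(8+r^2)^2 - (-32*r)*(2*(8+r^2)*(2*r)))/((8+r^2)^2)^2)*Real.log r
          + (-32*r/(8+r^2)^2)*r⁻¹
          + (-(2*r)*((8+r^2)*r) - (8-r^2)*((2*r)*r + (8+r^2)*1))/((8+r^2)*r)^2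
          - (32*(8+r^2)^2 - (32*r)*(2*(8+r^2)*(2*r)))/((8+r^2)^2)^2)) r :=
    ((hA.const_mul c).add (hB.const_mul a)).add (hb.const_mul b)
  convert this using 1
  unfold stmt8psidd
  field_simp
  ring

lemma stmt8_logz (r : ℝ) :
    Real.log (64 / (8 + r ^ 2) ^ 2) = 2*Real.log 8 - 2*Real.log (8 + r^2) := by
  have hd : (0:ℝ) < 8 + r^2 := stmt8_den_pos r
  rw [Real.log_div (by norm_num) (by positivity), Real.log_pow,
    show (64:ℝ) = 8^2 by norm_num, Real.log_pow]
  push_cast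
  ring

lemma stmt8_ode (c a b : ℝ) {r : ℝ} (hr : 0 < r) :
    -(stmt8psidd c a b r) - stmt8psid c a b r / r =
      64/(8+r^2)^2 * (stmt8psi c a b r + c/2 * Real.log (64 / (8 + r ^ 2) ^ 2)) := by
  have hd : (8:ℝ) + r^2 ≠ 0 := (stmt8_den_pos r).ne'
  have hrne : r ≠ 0 := hr.ne'
  rw [stmt8_logz]
  unfold stmt8psi stmt8psid stmt8psidd
  field_simp
  ring

open Set Filter in
lemma stmt8_unique (c a b ε T : ℝ) (hε : 0 < ε) (φ : ℝ → ℝ)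
    (hφd1 : ∀ t ∈ Set.Ioi (0:ℝ), HasDerivAt φ (deriv φ t) t)
    (hφd2 : ∀ t ∈ Set.Ioi (0:ℝ), HasDerivAt (deriv φ) (deriv (deriv φ) t) t)
    (heq' : ∀ t ∈ Set.Ioi (0:ℝ), deriv (deriv φ) t =
      -(deriv φ t)/t - 64/(8+t^2)^2 * (φ t + c/2*Real.log (64/(8+t^2)^2)))
    (h1 : φ 1 = stmt8psi c a b 1) (h1' : deriv φ 1 = stmt8psid c a b 1)
    (ht0 : (1:ℝ) ∈ Set.Ioo ε T) :
    ∀ t ∈ Set.Ioo ε T, φ t = stmt8psi c a b t := by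
  set v : ℝ → ℝ × ℝ → ℝ × ℝ := fun t p =>
    (p.2, -p.2/(max ε (min t T)) - 64/(8+(max ε (min t T))^2)^2 *
      (p.1 + c/2*Real.log (64/(8+(max ε (min t T))^2)^2))) with hv_def
  have hK : ((1 + 1/ε).toNNReal : ℝ) = 1 + 1/ε := Real.coe_toNNReal _ (by positivity)
  have hlip : ∀ t, LipschitzOnWith (1 + 1/ε).toNNReal (v t) Set.univ := by
    intro t
    apply LipschitzOnWith.of_dist_le_mul
    intro x _ y _
    simp only [hv_def, Prod.dist_eq, Real.dist_eq, hK]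
    set st := max ε (min t T) with hst_def
    have hst : ε ≤ st := le_max_left _ _
    have hstpos : 0 < st := lt_of_lt_of_le hε hst
    have hw0 : (0:ℝ) < 64/(8+st^2)^2 := by positivity
    have hw1 : 64/(8+st^2)^2 ≤ 1 := by
      rw [div_le_one (by positivity)]; nlinarith [sq_nonneg st, sq_nonneg (st^2)]
    set w := 64/(8+st^2)^2 with hw_def
    set d1 := |x.1 - y.1| with hd1
    set d2 := |x.2 - y.2| with hd2
    set M := max d1 d2 with hM
    have hd1M : d1 ≤ M := le_max_left _ _
    have hd2M : d2 ≤ M := le_max_right _ _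
    have hM0 : 0 ≤ M := le_trans (abs_nonneg _) hd1M
    have hiε : (0:ℝ) < 1/ε := by positivity
    have key : |(-x.2/st - w * (x.1 + c/2*Real.log (64/(8+st^2)^2)))
        - (-y.2/st - w * (y.1 + c/2*Real.log (64/(8+st^2)^2)))| ≤ d2 * (1/ε) + d1 := by
      have e1 : (-x.2/st - w * (x.1 + c/2*Real.log (64/(8+st^2)^2)))
          - (-y.2/st - w * (y.1 + c/2*Real.log (64/(8+st^2)^2)))
          = -((x.2 - y.2)/st + w * (x.1 - y.1)) := by field_simp; ring
      rw [e1, abs_neg]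
      calc |(x.2 - y.2)/st + w * (x.1 - y.1)|
          ≤ |(x.2 - y.2)/st| + |w * (x.1 - y.1)| := abs_add_le _ _
        _ = d2 / st + w * d1 := by
            rw [abs_div, abs_mul, abs_of_pos hstpos, abs_of_pos hw0]
        _ ≤ d2 * (1/ε) + d1 := by
            have h1 : d2 / st ≤ d2 * (1/ε) := by
              rw [div_eq_mul_inv, ← one_div]
              exact mul_le_mul_of_nonneg_left (one_div_le_one_div_of_le hε hst) (abs_nonneg _)
            have h2 : w * d1 ≤ d1 := by
              nlinarith [abs_nonneg (x.1 - y.1)]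
            linarith
    refine max_le ?_ ?_
    · nlinarith [mul_nonneg hiε.le hM0]
    · refine key.trans ?_
      nlinarith [mul_nonneg hiε.le (sub_nonneg.2 hd2M)]
  have key := ODE_solution_unique_of_mem_Ioo (K := (1 + 1/ε).toNNReal) (v := v)
    (s := fun _ => (Set.univ : Set (ℝ × ℝ)))
    (f := fun t => (φ t, deriv φ t)) (g := fun t => (stmt8psi c a b t, stmt8psid c a b t))
    (t₀ := 1) (a := ε) (b := T) (fun t _ => hlip t) ht0 ?_ ?_ ?_
  · intro t ht
    exact congrArg Prod.fst (key ht)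
  · intro t ht
    have htpos : 0 < t := lt_trans hε ht.1
    have hstt : max ε (min t T) = t := by
      rw [min_eq_left ht.2.le, max_eq_right ht.1.le]
    refine ⟨?_, trivial⟩
    have hpair : HasDerivAt (fun t => (φ t, deriv φ t)) (deriv φ t, deriv (deriv φ) t) t :=
      (hφd1 t htpos).prodMk (hφd2 t htpos)
    refine hpair.congr_deriv ?_
    symm
    simp only [hv_def, hstt]
    exact Prod.ext rfl (heq' t htpos).symm
  · intro t ht
    have htpos : 0 < t := lt_trans hε ht.1
    have hstt : max ε (min t T) = t := by
      rw [min_eq_left ht.2.le, max_eq_right ht.1.le]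
    refine ⟨?_, trivial⟩
    have hpair : HasDerivAt (fun t => (stmt8psi c a b t, stmt8psid c a b t))
        (stmt8psid c a b t, stmt8psidd c a b t) t :=
      (stmt8_hasDeriv1 c a b htpos).prodMk (stmt8_hasDeriv2 c a b htpos)
    refine hpair.congr_deriv ?_
    symm
    simp only [hv_def, hstt]
    refine Prod.ext rfl ?_
    have h3 := stmt8_ode c a b htpos
    have h2 : -stmt8psid c a b t / t = -(stmt8psid c a b t / t) := neg_div t _
    linarith
  · exact Prod.ext h1 h1'

open Set Filter Topology in
lemma stmt8_tendstoG (c a b : ℝ) :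
    Tendsto (fun r => stmt8psi c a b r - b*((8-r^2)/(8+r^2))*Real.log r)
      (𝓝[>] (0:ℝ)) (𝓝 (a + 2*b)) := by
  have hG : ContinuousAt (fun r : ℝ =>
      c*(Real.log (8+r^2) + 8/(8+r^2) - 1 - Real.log 8)
      + a*((8-r^2)/(8+r^2)) + b*(16/(8+r^2))) 0 := by
    have hc8 : ContinuousAt (fun r : ℝ => 8 + r^2) 0 := by fun_prop
    have hlog : ContinuousAt (fun r : ℝ => Real.log (8+r^2)) 0 :=
      ContinuousAt.log hc8 (by norm_num)
    have h1 : ContinuousAt (fun r : ℝ => (8:ℝ)/(8+r^2)) 0 :=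
      ContinuousAt.div (by fun_prop) hc8 (by norm_num)
    have h2 : ContinuousAt (fun r : ℝ => ((8:ℝ)-r^2)/(8+r^2)) 0 :=
      ContinuousAt.div (by fun_prop) hc8 (by norm_num)
    have h3 : ContinuousAt (fun r : ℝ => (16:ℝ)/(8+r^2)) 0 :=
      ContinuousAt.div (by fun_prop) hc8 (by norm_num)
    exact (((((hlog.add h1).sub continuousAt_const).sub
      (continuousAt_const : ContinuousAt (fun _ : ℝ => Real.log 8) 0)).const_mul c).add
      (h2.const_mul a)).add (h3.const_mul b)
  have ht := hG.tendsto.mono_left (nhdsWithin_le_nhds (s := Set.Ioi (0:ℝ)))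
  have hval : c * (Real.log (8 + (0:ℝ) ^ 2) + 8 / (8 + (0:ℝ) ^ 2) - 1 - Real.log 8) +
      a * ((8 - (0:ℝ) ^ 2) / (8 + (0:ℝ) ^ 2)) + b * (16 / (8 + (0:ℝ) ^ 2)) = a + 2*b := by
    norm_num; ring
  rw [hval] at ht
  refine ht.congr fun r => ?_
  unfold stmt8psi
  ring

theorem stmt_8 (α β : ℝ) (hα : 0 < α) (hβ : 0 < β) (φ : ℝ → ℝ)
    (hφ : ContDiffOn ℝ 2 φ (Set.Ioi (0 : ℝ)))
    (hcont : ContinuousWithinAt φ (Set.Ici (0 : ℝ)) 0)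
    (h0 : φ 0 = 0)
    (heq : ∀ r ∈ Set.Ioi (0 : ℝ),
      -(deriv (deriv φ) r) - deriv φ r / r =
        Real.exp (Real.log (64 / (8 + r ^ 2) ^ 2)) *
          (φ r + α * β / 2 * Real.log (64 / (8 + r ^ 2) ^ 2))) :
    ∀ r ∈ Set.Ici (0 : ℝ),
      φ r = α * β * (Real.log (8 + r ^ 2) + 8 / (8 + r ^ 2) - 1 - Real.log 8) := by
  set c := α * β with hc
  -- derivative facts for φ
  have hφd1 : ∀ t ∈ Set.Ioi (0:ℝ), HasDerivAt φ (deriv φ t) t := by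
    intro t ht
    exact ((hφ.differentiableOn two_ne_zero).differentiableAt
      (isOpen_Ioi.mem_nhds ht)).hasDerivAt
  have hφd2 : ∀ t ∈ Set.Ioi (0:ℝ), HasDerivAt (deriv φ) (deriv (deriv φ) t) t := by
    intro t ht
    have h1 : ContDiffOn ℝ 1 (deriv φ) (Set.Ioi (0:ℝ)) :=
      hφ.deriv_of_isOpen isOpen_Ioi (by norm_num)
    exact ((h1.differentiableOn one_ne_zero).differentiableAt
      (isOpen_Ioi.mem_nhds ht)).hasDerivAt
  have heq' : ∀ t ∈ Set.Ioi (0:ℝ), deriv (deriv φ) t =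
      -(deriv φ t)/t - 64/(8+t^2)^2 * (φ t + c/2*Real.log (64/(8+t^2)^2)) := by
    intro t ht
    have h1 := heq t ht
    rw [Real.exp_log (by positivity)] at h1
    have h2 : -(deriv φ t)/t = -(deriv φ t / t) := neg_div t _
    linarith
  -- match at r = 1
  set P := φ 1 - stmt8psi c 0 0 1 with hP
  set Q := deriv φ 1 - stmt8psid c 0 0 1 with hQ
  set a := 31/81*P - 16/9*Q with ha
  set b := 32/81*P + 7/9*Q with hb
  have h1 : φ 1 = stmt8psi c a b 1 := by
    simp only [stmt8psi, stmt8psid, ha, hb, hP, hQ]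
    norm_num [Real.log_one]
    ring
  have h1' : deriv φ 1 = stmt8psid c a b 1 := by
    simp only [stmt8psi, stmt8psid, ha, hb, hP, hQ]
    norm_num [Real.log_one]
    ring
  -- φ coincides with ψ on (0, ∞)
  have hsol : ∀ r ∈ Set.Ioi (0:ℝ), φ r = stmt8psi c a b r := by
    intro r hr
    rw [Set.mem_Ioi] at hr
    have hεpos : (0:ℝ) < min r 1 / 2 := by positivity
    refine stmt8_unique c a b (min r 1 / 2) (r + 2) hεpos φ hφd1 hφd2 heq' h1 h1'
      ⟨?_, ?_⟩ r ⟨?_, ?_⟩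
    · have : min r 1 ≤ 1 := min_le_right _ _
      linarith
    · linarith
    · have : min r 1 ≤ r := min_le_left _ _
      linarith
    · linarith
  -- limits as r → 0⁺
  have tphi : Filter.Tendsto φ (nhdsWithin 0 (Set.Ioi (0:ℝ))) (nhds 0) := by
    have := hcont.tendsto
    rw [h0] at this
    exact this.mono_left (nhdsWithin_mono 0 Set.Ioi_subset_Ici_self)
  have tpsi : Filter.Tendsto (stmt8psi c a b) (nhdsWithin 0 (Set.Ioi (0:ℝ))) (nhds 0) := by
    refine tphi.congr' ?_
    filter_upwards [self_mem_nhdsWithin] with r hr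
    exact hsol r hr
  have tG := stmt8_tendstoG c a b
  have tBL : Filter.Tendsto (fun r => b*((8-r^2)/(8+r^2))*Real.log r)
      (nhdsWithin 0 (Set.Ioi (0:ℝ))) (nhds (0 - (a + 2*b))) := by
    refine (tpsi.sub tG).congr fun r => ?_
    ring
  have hbu : Filter.Tendsto (fun r : ℝ => b*((8-r^2)/(8+r^2)))
      (nhdsWithin 0 (Set.Ioi (0:ℝ))) (nhds b) := by
    have hc8 : ContinuousAt (fun r : ℝ => 8 + r^2) 0 := by fun_prop
    have h2 : ContinuousAt (fun r : ℝ => b*((8-r^2)/(8+r^2))) 0 :=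
      (ContinuousAt.div (by fun_prop) hc8 (by norm_num)).const_mul b
    have := h2.tendsto.mono_left (nhdsWithin_le_nhds (s := Set.Ioi (0:ℝ)))
    norm_num at this
    exact this
  have hb0 : b = 0 := by
    by_contra hbne
    rcases lt_or_gt_of_ne hbne with hneg | hpos
    · exact not_tendsto_nhds_of_tendsto_atTop
        (Filter.Tendsto.neg_mul_atBot hneg hbu Real.tendsto_log_nhdsGT_zero)
        _ tBL
    · exact not_tendsto_nhds_of_tendsto_atBot
        (Filter.Tendsto.pos_mul_atBot hpos hbu Real.tendsto_log_nhdsGT_zero)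
        _ tBL
  have ha0 : a = 0 := by
    have tBL' : Filter.Tendsto (fun _ : ℝ => (0:ℝ))
        (nhdsWithin 0 (Set.Ioi (0:ℝ))) (nhds (0 - (a + 2*b))) := by
      refine tBL.congr fun r => ?_
      rw [hb0]; ring
    have := tendsto_nhds_unique tendsto_const_nhds tBL'
    rw [hb0] at this
    linarith
  -- conclude
  intro r hr
  rcases eq_or_lt_of_le (Set.mem_Ici.mp hr) with hr0 | hr0
  · rw [← hr0, h0]
    norm_num
  · rw [hsol r hr0]
    simp only [stmt8psi, ha0, hb0]
    ring
end

section
/- Let f(t) = t e^{t² + |t|} and F(t) = ∫₀^t f(s) ds. For every ε > 0 there exists t_ε > 0 such that ε f(t) t − F(t) ≥ 0 for all t ∈ ℝ with |t| ≥ t_ε. -/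
open intervalIntegral

theorem stmt_12 (f F : ℝ → ℝ)
    (hf : ∀ t : ℝ, f t = t * Real.exp (t ^ 2 + |t|))
    (hF : ∀ t : ℝ, F t = ∫ s in (0 : ℝ)..t, f s) :
    ∀ ε > 0, ∃ tε > 0, ∀ t : ℝ, tε ≤ |t| → 0 ≤ ε * f t * t - F t := by
  have hfc : Continuous f := by
    have : Continuous fun t : ℝ => t * Real.exp (t ^ 2 + |t|) := by
      continuity
    simpa [funext hf] using this
  -- f is odd
  have hodd : ∀ t : ℝ, f (-t) = - f t := by
    intro t
    simp [hf, abs_neg]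
  -- F is even
  have heven : ∀ t : ℝ, F (-t) = F t := by
    intro t
    rw [hF, hF]
    have h1 : (∫ s in (0:ℝ)..t, f (-s)) = ∫ s in (-t)..(0:ℝ), f s := by
      simpa using intervalIntegral.integral_comp_neg (a := (0:ℝ)) (b := t) (f := f)
    have h2 : (∫ s in (0:ℝ)..t, f (-s)) = ∫ s in (0:ℝ)..t, - f s := by
      simp [hodd]
    rw [intervalIntegral.integral_symm, ← h1, h2, intervalIntegral.integral_neg]
    ring
  -- key bound for nonnegative t
  have key : ∀ t : ℝ, 0 ≤ t → F t ≤ Real.exp (t ^ 2 + t) / 2 := by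
    intro t ht
    have hG : ∀ s : ℝ, HasDerivAt (fun u => Real.exp (u ^ 2 + u) / 2)
        ((2 * s + 1) * Real.exp (s ^ 2 + s) / 2) s := by
      intro s
      have h1 : HasDerivAt (fun u : ℝ => u ^ 2 + u) (2 * s + 1) s := by
        exact ((hasDerivAt_pow 2 s).add (hasDerivAt_id' s)).congr_deriv (by norm_num)
      have := (h1.exp).div_const 2
      exact this.congr_deriv (by ring)
    have hGc : Continuous fun s : ℝ => (2 * s + 1) * Real.exp (s ^ 2 + s) / 2 := by
      continuity
    have hint : (∫ s in (0:ℝ)..t, (2 * s + 1) * Real.exp (s ^ 2 + s) / 2)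
        = Real.exp (t ^ 2 + t) / 2 - 1 / 2 := by
      rw [intervalIntegral.integral_eq_sub_of_hasDerivAt (fun s _ => hG s)
        (hGc.intervalIntegrable 0 t)]
      norm_num
    have hmono : F t ≤ ∫ s in (0:ℝ)..t, (2 * s + 1) * Real.exp (s ^ 2 + s) / 2 := by
      rw [hF]
      apply intervalIntegral.integral_mono_on ht (hfc.intervalIntegrable 0 t)
        (hGc.intervalIntegrable 0 t)
      intro s hs
      rw [hf]
      have hs0 : 0 ≤ s := hs.1
      have habs : |s| = s := abs_of_nonneg hs0
      rw [habs]
      have hexp : 0 < Real.exp (s ^ 2 + s) := Real.exp_pos _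
      nlinarith
    have : (0:ℝ) < 1 / 2 := by norm_num
    linarith [hmono, hint.le, hint.ge]
  -- general bound
  have key' : ∀ t : ℝ, F t ≤ Real.exp (t ^ 2 + |t|) / 2 := by
    intro t
    rcases le_or_gt 0 t with h | h
    · simpa [abs_of_nonneg h] using key t h
    · have := key (-t) (by linarith)
      rw [heven] at this
      have habs : |t| = -t := abs_of_neg h
      calc F t ≤ Real.exp ((-t) ^ 2 + -t) / 2 := this
        _ = Real.exp (t ^ 2 + |t|) / 2 := by rw [habs]; ring_nf
  intro ε hε
  refine ⟨Real.sqrt (1 / (2 * ε)) + 1, by positivity, fun t ht => ?_⟩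
  have hsq : 1 / (2 * ε) ≤ t ^ 2 := by
    have h1 : Real.sqrt (1 / (2 * ε)) ≤ |t| := by
      have : (0:ℝ) ≤ Real.sqrt (1 / (2 * ε)) := Real.sqrt_nonneg _
      linarith
    have h2 : Real.sqrt (1 / (2 * ε)) ^ 2 ≤ |t| ^ 2 := by
      apply pow_le_pow_left₀ (Real.sqrt_nonneg _) h1
    rwa [Real.sq_sqrt (by positivity), sq_abs] at h2
  have hεt : 1 / 2 ≤ ε * t ^ 2 := by
    rw [div_le_iff₀ (by positivity)] at hsq
    nlinarith
  have hexp : 0 < Real.exp (t ^ 2 + |t|) := Real.exp_pos _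
  have hFt := key' t
  have hft : ε * f t * t = ε * t ^ 2 * Real.exp (t ^ 2 + |t|) := by
    rw [hf]; ring
  rw [hft]
  nlinarith
end
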